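/- Assume the observation-driven model with the function g satisfying the contraction condition with a + b < 1, and let π be the unique stationary distribution of the conditional mean Markov chain {X_t}. Then the stationary mean is finite and satisfies E_π X_1 ≤ g(0,0)/(1 − (a+b)); moreover, for every t ≥ 1, E(X_t | X_1) ≤ g(0,0)·(1 − (a+b)^{t−1})/(1 − (a+b)) + (a+b)^{t−1} X_1. -/

import Mathlib

open MeasureTheory Filter

noncomputable section

/-- The one-parameter exponential family distribution with natural parameter `η`:
the measure with density `y ↦ exp (η y − A η) * h y` with respect to the base measure `μ`. -/
def expFam (μ : Measure ℝ) (A h : ℝ → ℝ) (η : ℝ) : Measure ℝ :=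
  μ.withDensity fun y => ENNReal.ofReal (Real.exp (η * y - A η) * h y)

/-- The generalized inverse CDF `F_x⁻¹(u) = inf {t ≥ 0 : F_x t ≥ u}`, where `F_x` is the
CDF of the exponential family member with mean `x = B(η)`. -/
def qtl (μ : Measure ℝ) (A h B : ℝ → ℝ) (x u : ℝ) : ℝ :=
  sInf {t : ℝ | 0 ≤ t ∧ ENNReal.ofReal u ≤ expFam μ A h (Function.invFun B x) (Set.Iic t)}

/-- The iterated random function `f_u(x) = g (x, F_x⁻¹(u))`. -/
def irf (μ : Measure ℝ) (A h B : ℝ → ℝ) (g : ℝ → ℝ → ℝ) (u x : ℝ) : ℝ :=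
  g x (qtl μ A h B x u)

/-- The forward process `X_n(x) = (f_{U_n} ∘ ⋯ ∘ f_{U_1}) (x)`. -/
def fwd {Ω : Type*} (μ : Measure ℝ) (A h B : ℝ → ℝ) (g : ℝ → ℝ → ℝ) (U : ℕ → Ω → ℝ) :
    ℕ → ℝ → Ω → ℝ
  | 0 => fun x _ => x
  | n + 1 => fun x ω => irf μ A h B g (U (n + 1) ω) (fwd μ A h B g U n x ω)

/-- The backward process `Z_n(x) = (f_{U_1} ∘ ⋯ ∘ f_{U_n}) (x)`. -/
def bwd {Ω : Type*} (μ : Measure ℝ) (A h B : ℝ → ℝ) (g : ℝ → ℝ → ℝ) (U : ℕ → Ω → ℝ) :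
    ℕ → ℝ → Ω → ℝ
  | 0 => fun x _ => x
  | n + 1 => fun x ω => bwd μ A h B g U n (irf μ A h B g (U (n + 1) ω) x) ω

/-- The uniform distribution on `(0,1)`. -/
def unif01 : Measure ℝ := volume.restrict (Set.Ioo (0 : ℝ) 1)

/-- `π` is a stationary distribution of the Markov chain `X_t = g (X_{t−1}, Y_{t−1})`,
realized through the iterated random functions `f_u` driven by iid Uniform(0,1) inputs. -/
def IsStationaryDist (μ : Measure ℝ) (A h B : ℝ → ℝ) (g : ℝ → ℝ → ℝ) (π : Measure ℝ) : Prop :=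
  Measure.map (fun p : ℝ × ℝ => irf μ A h B g p.2 p.1) (π.prod unif01) = π

end


section AuxStmt4
open MeasureTheory Filter Set ENNReal

lemma unif01_prob : IsProbabilityMeasure unif01 := by
  constructor
  rw [unif01, Measure.restrict_apply_univ, Real.volume_Ioo]
  norm_num

lemma unif01_compl : unif01 (Set.Ioo (0:ℝ) 1)ᶜ = 0 := by
  rw [unif01, Measure.restrict_apply (measurableSet_Ioo.compl)]
  simp


lemma qtl_nonneg (μ : Measure ℝ) (A h B : ℝ → ℝ) (x u : ℝ) : 0 ≤ qtl μ A h B x u := by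
  apply Real.sInf_nonneg
  rintro t ⟨ht, -⟩; exact ht

lemma qtlSet_bddBelow (μ : Measure ℝ) (A h B : ℝ → ℝ) (x u : ℝ) :
    BddBelow {t : ℝ | 0 ≤ t ∧ ENNReal.ofReal u ≤ expFam μ A h (Function.invFun B x) (Set.Iic t)} :=
  ⟨0, fun t ht => ht.1⟩

lemma qtl_le_of (μ : Measure ℝ) (A h B : ℝ → ℝ) (x u t : ℝ) (ht : 0 ≤ t)
    (hF : ENNReal.ofReal u ≤ expFam μ A h (Function.invFun B x) (Set.Iic t)) :
    qtl μ A h B x u ≤ t :=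
  csInf_le (qtlSet_bddBelow μ A h B x u) ⟨ht, hF⟩

lemma qtlSet_nonempty (μ : Measure ℝ) (A h B : ℝ → ℝ) (x u : ℝ)
    (hprob : IsProbabilityMeasure (expFam μ A h (Function.invFun B x)))
    (hu : ENNReal.ofReal u < 1) :
    {t : ℝ | 0 ≤ t ∧ ENNReal.ofReal u ≤ expFam μ A h (Function.invFun B x) (Set.Iic t)}.Nonempty := by
  set ν := expFam μ A h (Function.invFun B x)
  have hsup : (⨆ n : ℕ, ν (Set.Iic (n : ℝ))) = ν Set.univ := by
    rw [← Directed.measure_iUnion]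
    · congr 1
      ext y; simp only [Set.mem_iUnion, Set.mem_Iic, Set.mem_univ, iff_true]
      obtain ⟨n, hn⟩ := exists_nat_ge y; exact ⟨n, hn⟩
    · intro i j
      exact ⟨max i j, Set.Iic_subset_Iic.mpr (by exact_mod_cast le_max_left i j),
        Set.Iic_subset_Iic.mpr (by exact_mod_cast le_max_right i j)⟩
  have : ENNReal.ofReal u < ⨆ n : ℕ, ν (Set.Iic (n : ℝ)) := by
    rw [hsup, hprob.measure_univ]; exact hu
  obtain ⟨n, hn⟩ := lt_iSup_iff.mp this
  exact ⟨n, Nat.cast_nonneg n, hn.le⟩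

lemma qtl_mono_u (μ : Measure ℝ) (A h B : ℝ → ℝ) (x u u' : ℝ) (huu' : u ≤ u')
    (hne : {t : ℝ | 0 ≤ t ∧ ENNReal.ofReal u' ≤ expFam μ A h (Function.invFun B x) (Set.Iic t)}.Nonempty) :
    qtl μ A h B x u ≤ qtl μ A h B x u' := by
  apply csInf_le_csInf (qtlSet_bddBelow μ A h B x u) hne
  rintro t ⟨ht, hF⟩
  exact ⟨ht, le_trans (ENNReal.ofReal_le_ofReal huu') hF⟩

/-- The infimum defining the quantile is attained: `F (qtl u) ≥ u` when the set is nonempty. -/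
lemma ofReal_le_F_qtl (μ : Measure ℝ) (A h B : ℝ → ℝ) (x u : ℝ)
    (hprob : IsProbabilityMeasure (expFam μ A h (Function.invFun B x)))
    (hne : {t : ℝ | 0 ≤ t ∧ ENNReal.ofReal u ≤ expFam μ A h (Function.invFun B x) (Set.Iic t)}.Nonempty) :
    ENNReal.ofReal u ≤ expFam μ A h (Function.invFun B x) (Set.Iic (qtl μ A h B x u)) := by
  haveI := hprob
  set ν := expFam μ A h (Function.invFun B x) with hν
  haveI : IsFiniteMeasure ν := by infer_instance
  set T := {t : ℝ | 0 ≤ t ∧ ENNReal.ofReal u ≤ ν (Set.Iic t)}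
  set s0 := sInf T
  have hIic : Set.Iic s0 = ⋂ n : ℕ, Set.Iic (s0 + 1/(n+1)) := by
    ext y
    simp only [Set.mem_Iic, Set.mem_iInter]
    constructor
    · intro hy n; have : (0:ℝ) < 1/(n+1) := by positivity
      linarith
    · intro hy
      by_contra hc
      push_neg at hc
      obtain ⟨n, hn⟩ := exists_nat_one_div_lt (sub_pos.mpr hc)
      have := hy n
      linarith
  have key : ∀ n : ℕ, ENNReal.ofReal u ≤ ν (Set.Iic (s0 + 1/(n+1))) := by
    intro n
    have hpos : (0:ℝ) < 1/(n+1) := by positivity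
    have : s0 < s0 + 1/(n+1) := by linarith
    obtain ⟨t, htT, htlt⟩ := (csInf_lt_iff (qtlSet_bddBelow μ A h B x u) hne).mp this
    exact le_trans htT.2 (measure_mono (Set.Iic_subset_Iic.mpr htlt.le))
  have hinter : ν (Set.Iic s0) = ⨅ n : ℕ, ν (Set.Iic (s0 + 1/(n+1))) := by
    rw [hIic]
    apply Directed.measure_iInter
    · intro n; exact measurableSet_Iic.nullMeasurableSet
    · intro i j
      have key2 : ∀ k l : ℕ, k ≤ l → Set.Iic (s0 + 1/((l:ℝ)+1)) ⊆ Set.Iic (s0 + 1/((k:ℝ)+1)) := by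
        intro k l hkl
        apply Set.Iic_subset_Iic.mpr
        have : (1:ℝ)/((l:ℝ)+1) ≤ 1/((k:ℝ)+1) := by
          apply one_div_le_one_div_of_le (by positivity)
          exact_mod_cast add_le_add_left (Nat.cast_le.mpr hkl) 1
        linarith
      exact ⟨max i j, key2 i (max i j) (le_max_left i j), key2 j (max i j) (le_max_right i j)⟩
    · exact ⟨0, measure_ne_top _ _⟩
  rw [show qtl μ A h B x u = s0 from rfl, hinter]
  exact le_iInf key


/-- Pointwise comparison of exponential family densities yields measure comparison on a set. -/
lemma expFam_restrict_le {μ : Measure ℝ} {A h : ℝ → ℝ} (η1 η2 c : ℝ) {E : Set ℝ} (hE : MeasurableSet E)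
    (hc : ∀ y ∈ E, η1 * y - A η1 ≤ c + (η2 * y - A η2)) :
    (expFam μ A h η1).restrict E ≤ (ENNReal.ofReal (Real.exp c)) • (expFam μ A h η2).restrict E := by
  rw [Measure.le_iff]
  intro s hs
  rw [Measure.smul_apply, Measure.restrict_apply hs, Measure.restrict_apply hs, smul_eq_mul]
  rw [expFam, expFam, withDensity_apply _ (hs.inter hE), withDensity_apply _ (hs.inter hE)]
  rw [← MeasureTheory.lintegral_const_mul' _ _ ENNReal.ofReal_ne_top]
  apply lintegral_mono_ae
  filter_upwards [ae_restrict_mem (hs.inter hE)] with y hy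
  have hyE : y ∈ E := hy.2
  rcases le_or_gt 0 (h y) with hh | hh
  · rw [← ENNReal.ofReal_mul (Real.exp_nonneg c), ← mul_assoc, ← Real.exp_add]
    apply ENNReal.ofReal_le_ofReal
    apply mul_le_mul_of_nonneg_right _ hh
    exact Real.exp_le_exp.mpr (by linarith [hc y hyE])
  · have h1 : Real.exp (η1 * y - A η1) * h y ≤ 0 :=
      mul_nonpos_of_nonneg_of_nonpos (Real.exp_nonneg _) hh.le
    rw [ENNReal.ofReal_of_nonpos h1]
    exact zero_le

lemma expFam_apply_le {μ : Measure ℝ} {A h : ℝ → ℝ} (η1 η2 c : ℝ) {E : Set ℝ} (hE : MeasurableSet E)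
    (hc : ∀ y ∈ E, η1 * y - A η1 ≤ c + (η2 * y - A η2)) :
    expFam μ A h η1 E ≤ ENNReal.ofReal (Real.exp c) * expFam μ A h η2 E := by
  have := Measure.le_iff.mp (expFam_restrict_le (μ := μ) (A := A) (h := h) η1 η2 c hE hc)
    Set.univ MeasurableSet.univ
  simpa [Measure.restrict_apply_univ] using this

/-- First-order stochastic dominance from likelihood ratio order: the CDF decreases in η. -/
lemma expFam_cdf_anti (μ : Measure ℝ) (A h : ℝ → ℝ) (η1 η2 : ℝ) (hη : η1 ≤ η2)
    (h1 : IsProbabilityMeasure (expFam μ A h η1))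
    (h2 : IsProbabilityMeasure (expFam μ A h η2)) (t : ℝ) :
    expFam μ A h η2 (Set.Iic t) ≤ expFam μ A h η1 (Set.Iic t) := by
  set ν1 := expFam μ A h η1
  set ν2 := expFam μ A h η2
  set r : ℝ := Real.exp ((η2 - η1) * t + (A η1 - A η2)) with hr
  have hrpos : 0 < r := Real.exp_pos _
  -- Claim 1 : ν2 (Iic t) ≤ r * ν1 (Iic t)
  have c1 : ν2 (Set.Iic t) ≤ ENNReal.ofReal r * ν1 (Set.Iic t) := by
    apply expFam_apply_le η2 η1 _ measurableSet_Iic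
    intro y hy
    simp only [Set.mem_Iic] at hy
    have : (η2 - η1) * y ≤ (η2 - η1) * t := mul_le_mul_of_nonneg_left hy (by linarith)
    linarith
  -- Claim 2 : ν1 (Ioi t) ≤ r⁻¹ * ν2 (Ioi t)
  have c2 : ν1 (Set.Ioi t) ≤ ENNReal.ofReal r⁻¹ * ν2 (Set.Ioi t) := by
    have : r⁻¹ = Real.exp ((η1 - η2) * t + (A η2 - A η1)) := by
      rw [hr, ← Real.exp_neg]; ring_nf
    rw [this]
    apply expFam_apply_le η1 η2 _ measurableSet_Ioi
    intro y hy
    simp only [Set.mem_Ioi] at hy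
    have : (η1 - η2) * y ≤ (η1 - η2) * t := mul_le_mul_of_nonpos_left hy.le (by linarith)
    linarith
  -- pass to real numbers
  set p := (ν1 (Set.Iic t)).toReal with hp
  set q := (ν2 (Set.Iic t)).toReal with hq
  have hfin1 : ν1 (Set.Iic t) ≠ ⊤ := measure_ne_top _ _
  have hfin2 : ν2 (Set.Iic t) ≠ ⊤ := measure_ne_top _ _
  have hp1 : p ≤ 1 := by
    rw [hp]
    exact ENNReal.toReal_le_of_le_ofReal zero_le_one (by simpa using prob_le_one (μ := ν1) (s := Set.Iic t))
  have hq1 : q ≤ 1 := by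
    rw [hq]
    exact ENNReal.toReal_le_of_le_ofReal zero_le_one (by simpa using prob_le_one (μ := ν2) (s := Set.Iic t))
  have hp0 : 0 ≤ p := ENNReal.toReal_nonneg
  have hq0 : 0 ≤ q := ENNReal.toReal_nonneg
  have hIoi1 : (ν1 (Set.Ioi t)).toReal = 1 - p := by
    have : ν1 (Set.Ioi t) = 1 - ν1 (Set.Iic t) := by
      rw [← Set.compl_Iic, measure_compl measurableSet_Iic hfin1, h1.measure_univ]
    rw [this, ENNReal.toReal_sub_of_le (by simpa using prob_le_one (μ := ν1) (s := Set.Iic t)) one_ne_top]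
    simp [hp]
  have hIoi2 : (ν2 (Set.Ioi t)).toReal = 1 - q := by
    have : ν2 (Set.Ioi t) = 1 - ν2 (Set.Iic t) := by
      rw [← Set.compl_Iic, measure_compl measurableSet_Iic hfin2, h2.measure_univ]
    rw [this, ENNReal.toReal_sub_of_le (by simpa using prob_le_one (μ := ν2) (s := Set.Iic t)) one_ne_top]
    simp [hq]
  have rc1 : q ≤ r * p := by
    have := ENNReal.toReal_mono (by finiteness) c1
    rwa [ENNReal.toReal_mul, ENNReal.toReal_ofReal hrpos.le, ← hp, ← hq] at this
  have rc2 : 1 - p ≤ r⁻¹ * (1 - q) := by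
    have := ENNReal.toReal_mono (by finiteness) c2
    rwa [ENNReal.toReal_mul, ENNReal.toReal_ofReal (by positivity), hIoi1, hIoi2] at this
  -- conclude q ≤ p
  rw [← ENNReal.toReal_le_toReal hfin2 hfin1, ← hp, ← hq]
  rcases le_or_gt r 1 with hr1 | hr1
  · nlinarith
  · have : r * (1 - p) ≤ 1 - q := by
      calc r * (1-p) ≤ r * (r⁻¹ * (1-q)) := by nlinarith
        _ = 1 - q := by
            field_simp
    nlinarith

/-- For `u ≤ 0` the quantile is `0`. -/
lemma qtl_of_nonpos {μ : Measure ℝ} {A h B : ℝ → ℝ} (x u : ℝ) (hu : u ≤ 0) : qtl μ A h B x u = 0 := by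
  have : {t : ℝ | 0 ≤ t ∧ ENNReal.ofReal u ≤ expFam μ A h (Function.invFun B x) (Set.Iic t)}
      = Set.Ici 0 := by
    ext t
    simp only [Set.mem_setOf_eq, Set.mem_Ici, ENNReal.ofReal_eq_zero.mpr hu, zero_le, and_true]
  rw [qtl, this, csInf_Ici]

/-- Stochastic monotonicity of the quantile in the mean parameter. -/
lemma qtl_mono_x {μ : Measure ℝ} {A h B : ℝ → ℝ} (hB : StrictMono B) (w w' u : ℝ) (hww' : w ≤ w')
    (hw : B (Function.invFun B w) = w) (hw' : B (Function.invFun B w') = w')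
    (hpw : IsProbabilityMeasure (expFam μ A h (Function.invFun B w)))
    (hpw' : IsProbabilityMeasure (expFam μ A h (Function.invFun B w')))
    (hu1 : u < 1) :
    qtl μ A h B w u ≤ qtl μ A h B w' u := by
  rcases le_or_gt u 0 with hu0 | hu0
  · rw [qtl_of_nonpos w u hu0, qtl_of_nonpos w' u hu0]
  · have hη : Function.invFun B w ≤ Function.invFun B w' := by
      rw [← hB.le_iff_le, hw, hw']; exact hww'
    apply csInf_le_csInf (qtlSet_bddBelow μ A h B w u)
      (qtlSet_nonempty μ A h B w' u hpw' (ENNReal.ofReal_lt_one.mpr hu1))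
    rintro t ⟨ht, hF⟩
    exact ⟨ht, le_trans hF (expFam_cdf_anti μ A h _ _ hη hpw hpw' t)⟩

/-- Left-continuity of the quantile in `u`, via rational approximations. -/
lemma qtl_left_cont {μ : Measure ℝ} {A h B : ℝ → ℝ} (w u : ℝ)
    (hpw : IsProbabilityMeasure (expFam μ A h (Function.invFun B w)))
    (hu0 : 0 < u) (hu1 : u < 1) :
    ⨆ (q : ℚ) (_ : (q:ℝ) < u), ENNReal.ofReal (qtl μ A h B w q) =
      ENNReal.ofReal (qtl μ A h B w u) := by
  have hne : ∀ v : ℝ, v < 1 → {t : ℝ | 0 ≤ t ∧ ENNReal.ofReal v ≤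
      expFam μ A h (Function.invFun B w) (Set.Iic t)}.Nonempty := fun v hv =>
    qtlSet_nonempty μ A h B w v hpw (ENNReal.ofReal_lt_one.mpr hv)
  have hmono : ∀ q : ℚ, (q:ℝ) < u → qtl μ A h B w q ≤ qtl μ A h B w u := fun q hq =>
    qtl_mono_u μ A h B w q u hq.le (hne u hu1)
  apply le_antisymm
  · exact iSup₂_le fun q hq => ENNReal.ofReal_le_ofReal (hmono q hq)
  · set σ := ⨆ (q : ℚ) (_ : (q:ℝ) < u), ENNReal.ofReal (qtl μ A h B w q) with hσ
    have hσfin : σ ≠ ⊤ := by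
      apply ne_top_of_le_ne_top (b := ENNReal.ofReal (qtl μ A h B w u)) ENNReal.ofReal_ne_top
      exact iSup₂_le fun q hq => ENNReal.ofReal_le_ofReal (hmono q hq)
    set s := σ.toReal with hs
    have hqle : ∀ q : ℚ, (q:ℝ) < u → qtl μ A h B w q ≤ s := by
      intro q hq
      have h1 : ENNReal.ofReal (qtl μ A h B w q) ≤ σ := by
        rw [hσ]
        exact le_iSup₂ (f := fun (q : ℚ) (_ : (q:ℝ) < u) => ENNReal.ofReal (qtl μ A h B w q)) q hq
      have := ENNReal.toReal_mono hσfin h1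
      rwa [ENNReal.toReal_ofReal (qtl_nonneg μ A h B w _)] at this
    have hs0 : 0 ≤ s := ENNReal.toReal_nonneg
    have hFs : ENNReal.ofReal u ≤ expFam μ A h (Function.invFun B w) (Set.Iic s) := by
      by_contra hc
      push_neg at hc
      have hfin : expFam μ A h (Function.invFun B w) (Set.Iic s) ≠ ⊤ := measure_ne_top _ _
      have hlt : (expFam μ A h (Function.invFun B w) (Set.Iic s)).toReal < u := by
        rw [← ENNReal.toReal_ofReal hu0.le]
        exact ENNReal.toReal_strict_mono ENNReal.ofReal_ne_top hc
      obtain ⟨q, hq1, hq2⟩ := exists_rat_btwn (max_lt hlt hu0)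
      have hq0 : (0:ℝ) < q := lt_of_le_of_lt (le_max_right _ _) hq1
      have hqF : (expFam μ A h (Function.invFun B w) (Set.Iic s)).toReal < q :=
        lt_of_le_of_lt (le_max_left _ _) hq1
      -- q < u, so qtl w q ≤ s, and F (qtl w q) ≥ q
      have h2 : ENNReal.ofReal (q:ℝ) ≤ expFam μ A h (Function.invFun B w) (Set.Iic s) := by
        refine le_trans (ofReal_le_F_qtl μ A h B w q hpw (hne q (by linarith))) ?_
        exact measure_mono (Set.Iic_subset_Iic.mpr (hqle q hq2))
      have := ENNReal.toReal_mono hfin h2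
      rw [ENNReal.toReal_ofReal hq0.le] at this
      linarith
    have : qtl μ A h B w u ≤ s := qtl_le_of μ A h B w u s hs0 hFs
    calc ENNReal.ofReal (qtl μ A h B w u) ≤ ENNReal.ofReal s := ENNReal.ofReal_le_ofReal this
      _ = σ := by rw [hs, ENNReal.ofReal_toReal hσfin]


/-- The capped quantile function is measurable in `u`. -/
lemma qtl_capped_meas {μ : Measure ℝ} {A h B : ℝ → ℝ} (w : ℝ)
    (hpw : IsProbabilityMeasure (expFam μ A h (Function.invFun B w))) :
    Measurable (fun u => if u < 1 then qtl μ A h B w u else 0) := by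
  apply measurable_of_Ioi
  intro c
  rcases lt_or_ge c 0 with hc | hc
  · have : (fun u => if u < 1 then qtl μ A h B w u else 0) ⁻¹' Set.Ioi c = Set.univ := by
      ext u
      simp only [Set.mem_preimage, Set.mem_Ioi, Set.mem_univ, iff_true]
      split
      · exact lt_of_lt_of_le hc (qtl_nonneg μ A h B w u)
      · exact hc
    rw [this]; exact MeasurableSet.univ
  · apply Set.OrdConnected.measurableSet
    constructor
    rintro x hx z hz y ⟨hxy, hyz⟩
    simp only [Set.mem_preimage, Set.mem_Ioi] at hx hz ⊢
    have hz1 : z < 1 := by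
      by_contra hc1
      rw [if_neg hc1] at hz
      exact absurd hz (not_lt.mpr hc)
    have hy1 : y < 1 := lt_of_le_of_lt hyz hz1
    have hx1 : x < 1 := lt_of_le_of_lt hxy hy1
    rw [if_pos hx1] at hx
    rw [if_pos hy1]
    refine lt_of_lt_of_le hx (qtl_mono_u μ A h B w x y hxy ?_)
    exact qtlSet_nonempty μ A h B w y hpw (ENNReal.ofReal_lt_one.mpr hy1)

/-- The mean of the quantile transform is at most the mean of the distribution. -/
lemma qtl_lintegral_le {μ : Measure ℝ} {A h B : ℝ → ℝ} (w : ℝ)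
    (hpw : IsProbabilityMeasure (expFam μ A h (Function.invFun B w)))
    (hsupp : expFam μ A h (Function.invFun B w) (Set.Iio 0) = 0) :
    ∫⁻ u, ENNReal.ofReal (qtl μ A h B w u) ∂unif01 ≤
      ∫⁻ y, ENNReal.ofReal y ∂(expFam μ A h (Function.invFun B w)) := by
  set ν := expFam μ A h (Function.invFun B w) with hν
  haveI := hpw
  set φ : ℝ → ℝ := fun u => if u < 1 then qtl μ A h B w u else 0 with hφ
  have hφmeas : Measurable φ := qtl_capped_meas w hpw
  have hae : ∀ᵐ u ∂unif01, u ∈ Set.Ioo (0:ℝ) 1 := by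
    rw [ae_iff]
    exact measure_mono_null (fun u hu => by simpa using hu) unif01_compl
  have congr1 : ∫⁻ u, ENNReal.ofReal (qtl μ A h B w u) ∂unif01
      = ∫⁻ u, ENNReal.ofReal (φ u) ∂unif01 := by
    apply lintegral_congr_ae
    filter_upwards [hae] with u hu
    rw [hφ]; simp only [if_pos hu.2]
  rw [congr1]
  have lhs_lc : ∫⁻ u, ENNReal.ofReal (φ u) ∂unif01
      = ∫⁻ t in Set.Ioi 0, unif01 {u | t < φ u} := by
    apply lintegral_eq_lintegral_meas_lt unif01
    · refine Filter.Eventually.of_forall fun u => ?_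
      by_cases h1 : u < 1
      · simpa [hφ, h1] using qtl_nonneg μ A h B w u
      · simp [hφ, h1]
    · exact hφmeas.aemeasurable
  have rhs_lc : ∫⁻ y, ENNReal.ofReal y ∂ν = ∫⁻ t in Set.Ioi 0, ν {y | t < y} := by
    apply lintegral_eq_lintegral_meas_lt ν
    · have hnn : ∀ᵐ y ∂ν, (0:ℝ) ≤ y := by
        rw [ae_iff]
        apply measure_mono_null (fun y hy => ?_) hsupp
        simpa using hy
      filter_upwards [hnn] with y hy
      exact hy
    · exact aemeasurable_id
  rw [lhs_lc, rhs_lc]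
  apply lintegral_mono_ae
  filter_upwards [ae_restrict_mem measurableSet_Ioi] with t ht
  simp only [Set.mem_Ioi] at ht
  have hFfin : ν (Set.Iic t) ≠ ⊤ := measure_ne_top _ _
  set c := (ν (Set.Iic t)).toReal with hc
  have step1 : {u | t < φ u} ⊆ {u | ν (Set.Iic t) < ENNReal.ofReal u} := by
    intro u hu
    simp only [Set.mem_setOf_eq] at hu ⊢
    have hu1 : u < 1 := by
      by_contra hc1
      rw [hφ] at hu; simp only [if_neg hc1] at hu
      exact absurd hu (not_lt.mpr ht.le)
    rw [hφ] at hu; simp only [if_pos hu1] at hu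
    by_contra hcon
    push_neg at hcon
    exact absurd (qtl_le_of μ A h B w u t ht.le hcon) (not_le.mpr hu)
  have step2 : {u | ν (Set.Iic t) < ENNReal.ofReal u} = Set.Ioi c := by
    ext u
    simp only [Set.mem_setOf_eq, Set.mem_Ioi, hc]
    exact ENNReal.lt_ofReal_iff_toReal_lt hFfin
  have step3 : unif01 (Set.Ioi c) = 1 - ν (Set.Iic t) := by
    rw [unif01, Measure.restrict_apply measurableSet_Ioi]
    have : Set.Ioi c ∩ Set.Ioo (0:ℝ) 1 = Set.Ioo c 1 := by
      ext u
      simp only [Set.mem_inter_iff, Set.mem_Ioi, Set.mem_Ioo]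
      constructor
      · rintro ⟨h1, _, h3⟩; exact ⟨h1, h3⟩
      · rintro ⟨h1, h2⟩
        exact ⟨h1, lt_of_le_of_lt ENNReal.toReal_nonneg h1, h2⟩
    rw [this, Real.volume_Ioo, ENNReal.ofReal_sub _ ENNReal.toReal_nonneg,
      ENNReal.ofReal_one, ENNReal.ofReal_toReal hFfin]
  have step4 : ν {y | t < y} = 1 - ν (Set.Iic t) := by
    have : {y : ℝ | t < y} = (Set.Iic t)ᶜ := by
      ext y; simp [Set.mem_compl_iff]
    rw [this, measure_compl measurableSet_Iic hFfin, hpw.measure_univ]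
  calc unif01 {u | t < φ u} ≤ unif01 (Set.Ioi c) := by
        rw [← step2]; exact measure_mono step1
    _ = ν {y | t < y} := by rw [step3, step4]

/-- If the mean is finite, the `lintegral` of the identity equals the Bochner mean. -/
lemma mean_lintegral_eq (ν : Measure ℝ) (w : ℝ)
    (hfin : ∫⁻ y, ENNReal.ofReal y ∂ν ≠ ⊤) (hsupp : ν (Set.Iio 0) = 0)
    (hm : ∫ y, y ∂ν = w) :
    ∫⁻ y, ENNReal.ofReal y ∂ν = ENNReal.ofReal w := by
  have hnn0 : ∀ᵐ y ∂ν, (0:ℝ) ≤ y := by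
    rw [ae_iff]
    apply measure_mono_null (fun y hy => ?_) hsupp
    simpa using hy
  have hnn : 0 ≤ᵐ[ν] (fun y : ℝ => y) := by
    filter_upwards [hnn0] with y hy; exact hy
  have hint : Integrable (fun y : ℝ => y) ν := by
    refine ⟨aestronglyMeasurable_id, ?_⟩
    rw [hasFiniteIntegral_iff_ofReal hnn]
    exact lt_top_iff_ne_top.mpr hfin
  rw [← ofReal_integral_eq_lintegral_ofReal hint hnn, hm]

/-- If the mean is infinite, the Bochner mean is `0`. -/
lemma mean_zero_of_infinite (ν : Measure ℝ) (w : ℝ)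
    (hinf : ∫⁻ y, ENNReal.ofReal y ∂ν = ⊤) (hm : ∫ y, y ∂ν = w) : w = 0 := by
  rw [← hm]
  apply integral_undef
  intro hint
  have h2 := hint.2
  rw [HasFiniteIntegral] at h2
  have : ∫⁻ y, ENNReal.ofReal y ∂ν ≤ ∫⁻ y, (‖y‖₊ : ℝ≥0∞) ∂ν := by
    apply lintegral_mono
    intro y
    calc ENNReal.ofReal y ≤ ENNReal.ofReal |y| := ENNReal.ofReal_le_ofReal (le_abs_self y)
      _ = (‖y‖₊ : ℝ≥0∞) := (Real.enorm_eq_ofReal_abs y).symm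
  rw [hinf] at this
  exact absurd (lt_of_le_of_lt this h2) (lt_irrefl _)

/-- Comparison of means across the exponential family. -/
lemma expFam_mean_compare {μ : Measure ℝ} {A h : ℝ → ℝ} (η1 η2 : ℝ) (hη : η1 ≤ η2)
    (hsupp1 : expFam μ A h η1 (Set.Iio 0) = 0) :
    ∫⁻ y, ENNReal.ofReal y ∂(expFam μ A h η1) ≤
      ENNReal.ofReal (Real.exp (A η2 - A η1)) * ∫⁻ y, ENNReal.ofReal y ∂(expFam μ A h η2) := by
  set ν1 := expFam μ A h η1
  set ν2 := expFam μ A h η2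
  have hsplit : ∫⁻ y, ENNReal.ofReal y ∂ν1
      = ∫⁻ y in Set.Ici 0, ENNReal.ofReal y ∂ν1 + ∫⁻ y in (Set.Ici (0:ℝ))ᶜ, ENNReal.ofReal y ∂ν1 :=
    (lintegral_add_compl _ measurableSet_Ici).symm
  have hzero : ∫⁻ y in (Set.Ici (0:ℝ))ᶜ, ENNReal.ofReal y ∂ν1 = 0 := by
    rw [Set.compl_Ici]
    rw [Measure.restrict_eq_zero.mpr hsupp1]
    simp
  have hcomp : ∫⁻ y in Set.Ici 0, ENNReal.ofReal y ∂ν1 ≤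
      ENNReal.ofReal (Real.exp (A η2 - A η1)) * ∫⁻ y in Set.Ici 0, ENNReal.ofReal y ∂ν2 := by
    have hle := expFam_restrict_le (μ := μ) (A := A) (h := h) η1 η2 (A η2 - A η1)
      measurableSet_Ici (fun y hy => by
        simp only [Set.mem_Ici] at hy
        have : η1 * y ≤ η2 * y := mul_le_mul_of_nonneg_right hη hy
        linarith)
    calc ∫⁻ y in Set.Ici 0, ENNReal.ofReal y ∂ν1
        ≤ ∫⁻ y, ENNReal.ofReal y ∂((ENNReal.ofReal (Real.exp (A η2 - A η1))) • ν2.restrict (Set.Ici 0)) :=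
          lintegral_mono' hle le_rfl
      _ = ENNReal.ofReal (Real.exp (A η2 - A η1)) * ∫⁻ y in Set.Ici 0, ENNReal.ofReal y ∂ν2 := by
          rw [lintegral_smul_measure, smul_eq_mul]
  rw [hsplit, hzero, add_zero]
  refine le_trans hcomp (mul_le_mul_right (lintegral_mono' Measure.restrict_le_self le_rfl) _)


/-- A measurable modification of the quantile function, monotone in the mean parameter. -/
noncomputable def Qzq (μ : Measure ℝ) (A h B : ℝ → ℝ) (S : Set ℝ) (z : ℝ) (q : ℚ) : ℝ≥0∞ :=
  ⨆ (w : ℝ) (_ : w ∈ S ∩ Set.Iic z), ENNReal.ofReal (qtl μ A h B w q)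

/-- A jointly measurable modification of the quantile function. -/
noncomputable def Qfun (μ : Measure ℝ) (A h B : ℝ → ℝ) (S : Set ℝ) (z u : ℝ) : ℝ≥0∞ :=
  ⨆ (q : ℚ), if (q:ℝ) < u then Qzq μ A h B S z q else 0

lemma Qzq_mono {μ : Measure ℝ} {A h B : ℝ → ℝ} (S : Set ℝ) (q : ℚ) : Monotone (fun z => Qzq μ A h B S z q) := by
  intro z z' hzz'
  apply iSup_le
  intro w
  apply iSup_le
  intro hw
  exact le_iSup₂ (f := fun (w : ℝ) (_ : w ∈ S ∩ Set.Iic z') => ENNReal.ofReal (qtl μ A h B w q))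
    w ⟨hw.1, le_trans hw.2 hzz'⟩

lemma Qfun_meas {μ : Measure ℝ} {A h B : ℝ → ℝ} (S : Set ℝ) : Measurable (fun p : ℝ × ℝ => Qfun μ A h B S p.1 p.2) := by
  apply Measurable.iSup
  intro q
  have h1 : Measurable (fun p : ℝ × ℝ => Qzq μ A h B S p.1 q) :=
    (Qzq_mono S q).measurable.comp measurable_fst
  have h2 : MeasurableSet {p : ℝ × ℝ | (q:ℝ) < p.2} :=
    measurableSet_lt measurable_const measurable_snd
  exact Measurable.ite h2 h1 measurable_const

/-- On `(0,1)`, `Qfun` is the supremum of quantiles over `S ∩ Iic z`. -/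
lemma Qfun_eq {μ : Measure ℝ} {A h B : ℝ → ℝ} (S : Set ℝ)
    (hprob : ∀ w ∈ S, IsProbabilityMeasure (expFam μ A h (Function.invFun B w)))
    (z u : ℝ) (hu0 : 0 < u) (hu1 : u < 1) :
    Qfun μ A h B S z u = ⨆ (w : ℝ) (_ : w ∈ S ∩ Set.Iic z), ENNReal.ofReal (qtl μ A h B w u) := by
  rw [Qfun]
  have step1 : ∀ q : ℚ, (if (q:ℝ) < u then Qzq μ A h B S z q else 0)
      = ⨆ (_ : (q:ℝ) < u), Qzq μ A h B S z q := by
    intro q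
    by_cases hq : (q:ℝ) < u <;> simp [hq]
  simp_rw [step1, Qzq]
  apply le_antisymm
  · apply iSup_le; intro q
    apply iSup_le; intro hq
    apply iSup_le; intro w
    apply iSup_le; intro hw
    have h1 : ENNReal.ofReal (qtl μ A h B w q) ≤ ENNReal.ofReal (qtl μ A h B w u) := by
      rw [← qtl_left_cont w u (hprob w hw.1) hu0 hu1]
      exact le_iSup₂ (f := fun (q : ℚ) (_ : (q:ℝ) < u) =>
        ENNReal.ofReal (qtl μ A h B w (q:ℝ))) q hq
    exact le_trans h1 (le_iSup₂ (f := fun (w : ℝ) (_ : w ∈ S ∩ Set.Iic z) =>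
      ENNReal.ofReal (qtl μ A h B w u)) w hw)
  · apply iSup_le; intro w
    apply iSup_le; intro hw
    rw [← qtl_left_cont w u (hprob w hw.1) hu0 hu1]
    apply iSup_le; intro q
    apply iSup_le; intro hq
    refine le_trans ?_ (le_iSup _ q)
    refine le_trans ?_ (le_iSup _ hq)
    exact le_iSup₂ (f := fun (w : ℝ) (_ : w ∈ S ∩ Set.Iic z) =>
      ENNReal.ofReal (qtl μ A h B w (q:ℝ))) w hw

/-- At a point of `S`, `Qfun` is the quantile. -/
lemma Qfun_at_mem {μ : Measure ℝ} {A h B : ℝ → ℝ} (hB : StrictMono B) (S : Set ℝ)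
    (hSB : S ⊆ Set.range B)
    (hprob : ∀ w ∈ S, IsProbabilityMeasure (expFam μ A h (Function.invFun B w)))
    (z u : ℝ) (hz : z ∈ S) (hu0 : 0 < u) (hu1 : u < 1) :
    Qfun μ A h B S z u = ENNReal.ofReal (qtl μ A h B z u) := by
  have hinv : ∀ w ∈ S, B (Function.invFun B w) = w := fun w hw => Function.invFun_eq (hSB hw)
  rw [Qfun_eq S hprob z u hu0 hu1]
  apply le_antisymm
  · apply iSup_le; intro w
    apply iSup_le; intro hw
    apply ENNReal.ofReal_le_ofReal
    exact qtl_mono_x hB w z u hw.2 (hinv w hw.1) (hinv z hz) (hprob w hw.1) (hprob z hz) hu1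
  · exact le_iSup₂ (f := fun (w : ℝ) (_ : w ∈ S ∩ Set.Iic z) =>
      ENNReal.ofReal (qtl μ A h B w u)) z ⟨hz, le_refl z⟩

/-- Existence of an increasing cofinal sequence in a nonempty set bounded above. -/
lemma exists_cofinal_seq (E : Set ℝ) (hne : E.Nonempty) (hbdd : BddAbove E) :
    ∃ v : ℕ → ℝ, (∀ k, v k ∈ E) ∧ (∀ k l, k ≤ l → v k ≤ v l) ∧ ∀ w ∈ E, ∃ k, w ≤ v k := by
  by_cases hmem : sSup E ∈ E
  · exact ⟨fun _ => sSup E, fun _ => hmem, fun _ _ _ => le_refl _,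
      fun w hw => ⟨0, le_csSup hbdd hw⟩⟩
  · have hex : ∀ k : ℕ, ∃ w ∈ E, sSup E - 1/(k+1) < w := by
      intro k
      apply exists_lt_of_lt_csSup hne
      have : (0:ℝ) < 1/(k+1) := by positivity
      linarith
    choose u hu1 hu2 using hex
    set v : ℕ → ℝ := fun k => Nat.rec (u 0) (fun k vk => max vk (u (k+1))) k with hv
    have hv0 : v 0 = u 0 := rfl
    have hvs : ∀ k, v (k+1) = max (v k) (u (k+1)) := fun k => rfl
    have hvmem : ∀ k, v k ∈ E := by
      intro k
      induction k with
      | zero => rw [hv0]; exact hu1 0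
      | succ k ih =>
        rw [hvs]
        rcases max_cases (v k) (u (k+1)) with ⟨heq, -⟩ | ⟨heq, -⟩ <;> rw [heq]
        · exact ih
        · exact hu1 (k+1)
    have huv : ∀ k, u k ≤ v k := by
      intro k
      cases k with
      | zero => exact le_refl _
      | succ k => exact le_max_right _ _
    have hvmono : Monotone v := monotone_nat_of_le_succ (fun k => le_max_left _ _)
    refine ⟨v, hvmem, fun k l hkl => hvmono hkl, ?_⟩
    intro w hw
    have hwlt : w < sSup E := lt_of_le_of_ne (le_csSup hbdd hw) (fun he => hmem (he ▸ hw))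
    obtain ⟨k, hk⟩ := exists_nat_one_div_lt (sub_pos.mpr hwlt)
    refine ⟨k, ?_⟩
    have := hu2 k
    have huk : w < u k := by
      have : sSup E - 1/(k+1) < u k := hu2 k
      have hk' : (1:ℝ)/(k+1) < sSup E - w := hk
      linarith
    exact le_trans huk.le (huv k)

/-- The key integral bound: the expected value of the modified quantile transform is at
most `z`. -/
lemma Qfun_lintegral_le {μ : Measure ℝ} {A h B : ℝ → ℝ} (hB : StrictMono B) (S : Set ℝ) (hS0 : S ⊆ Set.Ici 0)
    (hSB : S ⊆ Set.range B)
    (hprob : ∀ w ∈ S, IsProbabilityMeasure (expFam μ A h (Function.invFun B w)))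
    (HM : ∀ w ∈ S, ∫⁻ u, ENNReal.ofReal (qtl μ A h B w u) ∂unif01 ≤ ENNReal.ofReal w)
    (z : ℝ) :
    ∫⁻ u, Qfun μ A h B S z u ∂unif01 ≤ ENNReal.ofReal z := by
  have hinv : ∀ w ∈ S, B (Function.invFun B w) = w := fun w hw => Function.invFun_eq (hSB hw)
  have hae : ∀ᵐ u ∂unif01, u ∈ Set.Ioo (0:ℝ) 1 := by
    rw [ae_iff]
    exact measure_mono_null (fun u hu => by simpa using hu) unif01_compl
  by_cases hE : (S ∩ Set.Iic z).Nonempty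
  · obtain ⟨v, hvmem, hvmono, hvcof⟩ := exists_cofinal_seq (S ∩ Set.Iic z) hE
      ⟨z, fun w hw => hw.2⟩
    set f : ℕ → ℝ → ℝ≥0∞ :=
      fun k u => ENNReal.ofReal (if u < 1 then qtl μ A h B (v k) u else 0) with hf
    have hfmeas : ∀ k, Measurable (f k) :=
      fun k => ENNReal.measurable_ofReal.comp (qtl_capped_meas (v k) (hprob _ (hvmem k).1))
    have hfmono : Monotone f := by
      intro k l hkl u
      rw [hf]
      simp only
      by_cases hu1 : u < 1
      · rw [if_pos hu1, if_pos hu1]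
        exact ENNReal.ofReal_le_ofReal (qtl_mono_x hB (v k) (v l) u (hvmono k l hkl)
          (hinv _ (hvmem k).1) (hinv _ (hvmem l).1)
          (hprob _ (hvmem k).1) (hprob _ (hvmem l).1) hu1)
      · rw [if_neg hu1, if_neg hu1]
    have hcongr : ∫⁻ u, Qfun μ A h B S z u ∂unif01 = ∫⁻ u, (⨆ k, f k u) ∂unif01 := by
      apply lintegral_congr_ae
      filter_upwards [hae] with u hu
      rw [Qfun_eq S hprob z u hu.1 hu.2]
      apply le_antisymm
      · apply iSup_le; intro w
        apply iSup_le; intro hw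
        obtain ⟨k, hk⟩ := hvcof w hw
        have : qtl μ A h B w u ≤ qtl μ A h B (v k) u :=
          qtl_mono_x hB w (v k) u hk (hinv w hw.1) (hinv _ (hvmem k).1)
            (hprob w hw.1) (hprob _ (hvmem k).1) hu.2
        refine le_trans (ENNReal.ofReal_le_ofReal this) (le_trans ?_ (le_iSup _ k))
        rw [hf]; simp only [if_pos hu.2]
        exact le_refl _
      · apply iSup_le; intro k
        rw [hf]; simp only [if_pos hu.2]
        exact le_iSup₂ (f := fun (w : ℝ) (_ : w ∈ S ∩ Set.Iic z) =>
          ENNReal.ofReal (qtl μ A h B w u)) (v k) (hvmem k)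
    rw [hcongr, lintegral_iSup hfmeas hfmono]
    apply iSup_le; intro k
    have h1 : ∫⁻ u, f k u ∂unif01 = ∫⁻ u, ENNReal.ofReal (qtl μ A h B (v k) u) ∂unif01 := by
      apply lintegral_congr_ae
      filter_upwards [hae] with u hu
      rw [hf]; simp only [if_pos hu.2]
    rw [h1]
    exact le_trans (HM _ (hvmem k).1) (ENNReal.ofReal_le_ofReal (hvmem k).2)
  · have : ∀ u, Qfun μ A h B S z u = 0 := by
      intro u
      rw [Qfun]
      apply le_antisymm _ zero_le
      apply iSup_le; intro q
      split
      · rw [Qzq]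
        apply iSup_le; intro w
        apply iSup_le; intro hw
        exact absurd ⟨w, hw⟩ hE
      · exact le_refl 0
    simp only [this, lintegral_zero]
    exact zero_le

/-- Iterates of a binary map. -/
noncomputable def itr (K : ℝ → ℝ → ℝ) (x : ℝ) : (n : ℕ) → (Fin n → ℝ) → ℝ
  | 0 => fun _ => x
  | n+1 => fun v => K (itr K x n (fun i => v i.castSucc)) (v (Fin.last n))

lemma itr_meas (K : ℝ → ℝ → ℝ) (hK : Measurable (fun p : ℝ × ℝ => K p.1 p.2)) (x : ℝ) :
    ∀ n, Measurable (itr K x n) := by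
  intro n
  induction n with
  | zero => exact measurable_const
  | succ n ih =>
    have h1 : Measurable (fun v : Fin (n+1) → ℝ => itr K x n (fun i => v i.castSucc)) :=
      ih.comp (measurable_pi_lambda _ (fun i => measurable_pi_apply _))
    have h2 : Measurable (fun v : Fin (n+1) → ℝ => v (Fin.last n)) := measurable_pi_apply _
    exact hK.comp (h1.prodMk h2)

/-- Positive-part modification of `g` is Lipschitz, hence measurable. -/
lemma gg_meas (g : ℝ → ℝ → ℝ) (a b : ℝ) (ha : 0 ≤ a) (hb : 0 ≤ b)
    (hcontr : ∀ x x' y y' : ℝ, 0 ≤ x → 0 ≤ x' → 0 ≤ y → 0 ≤ y' →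
      |g x y - g x' y'| ≤ a * |x - x'| + b * |y - y'|) :
    Measurable (fun p : ℝ × ℝ => g (max p.1 0) (max p.2 0)) := by
  have hlip : LipschitzWith (a+b).toNNReal (fun p : ℝ × ℝ => g (max p.1 0) (max p.2 0)) := by
    apply LipschitzWith.of_dist_le_mul
    intro p q
    rw [Real.dist_eq, Real.coe_toNNReal _ (by positivity), Prod.dist_eq]
    have h1 := hcontr (max p.1 0) (max q.1 0) (max p.2 0) (max q.2 0)
      (le_max_right _ _) (le_max_right _ _) (le_max_right _ _) (le_max_right _ _)
    have h2 : |max p.1 0 - max q.1 0| ≤ |p.1 - q.1| := abs_max_sub_max_le_abs _ _ _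
    have h3 : |max p.2 0 - max q.2 0| ≤ |p.2 - q.2| := abs_max_sub_max_le_abs _ _ _
    have h4 : |p.1 - q.1| ≤ max (dist p.1 q.1) (dist p.2 q.2) := by
      rw [Real.dist_eq]; exact le_max_left _ _
    have h5 : |p.2 - q.2| ≤ max (dist p.1 q.1) (dist p.2 q.2) := by
      rw [Real.dist_eq, Real.dist_eq]; exact le_max_right _ _
    have hd0 : 0 ≤ max (dist p.1 q.1) (dist p.2 q.2) := le_trans (abs_nonneg _) h4
    calc |g (max p.1 0) (max p.2 0) - g (max q.1 0) (max q.2 0)|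
        ≤ a * |max p.1 0 - max q.1 0| + b * |max p.2 0 - max q.2 0| := h1
      _ ≤ a * (max (dist p.1 q.1) (dist p.2 q.2)) + b * (max (dist p.1 q.1) (dist p.2 q.2)) := by
          apply add_le_add
          · exact mul_le_mul_of_nonneg_left (le_trans h2 h4) ha
          · exact mul_le_mul_of_nonneg_left (le_trans h3 h5) hb
      _ = (a+b) * max (dist p.1 q.1) (dist p.2 q.2) := by ring
  exact hlip.continuous.measurable



end AuxStmt4
/-- under the contraction condition, with `π` the unique stationary
distribution, the stationary mean satisfies `E_π X₁ ≤ g(0,0)/(1 − (a+b))`, and for the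
chain started at `X₁ = x` one has, for every `t ≥ 1`,
`E(X_t | X₁ = x) ≤ g(0,0) (1 − (a+b)^{t−1})/(1 − (a+b)) + (a+b)^{t−1} x`. -/
theorem stmt4 {Ω : Type*} [MeasurableSpace Ω] (P : Measure Ω) [IsProbabilityMeasure P]
    (μ : Measure ℝ) [SigmaFinite μ] (A h B : ℝ → ℝ)
    (hB : StrictMono B) (hAB : ∀ η, HasDerivAt A (B η) η)
    (g : ℝ → ℝ → ℝ) (a b : ℝ) (ha : 0 ≤ a) (hb : 0 ≤ b) (hab : a + b < 1)
    (hcontr : ∀ x x' y y' : ℝ, 0 ≤ x → 0 ≤ x' → 0 ≤ y → 0 ≤ y' →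
      |g x y - g x' y'| ≤ a * |x - x'| + b * |y - y'|)
    (hgnn : ∀ x y, 0 ≤ x → 0 ≤ y → 0 ≤ g x y)
    (S : Set ℝ) (hS0 : S ⊆ Set.Ici 0) (hSB : S ⊆ Set.range B)
    (hSg : ∀ x ∈ S, ∀ y, 0 ≤ y → g x y ∈ S)
    (hfamsupp : ∀ η, expFam μ A h η (Set.Iio 0) = 0)
    (hprob : ∀ x ∈ S, IsProbabilityMeasure (expFam μ A h (Function.invFun B x)))
    (hmean : ∀ x ∈ S, ∫ y, y ∂expFam μ A h (Function.invFun B x) = x)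
    (U : ℕ → Ω → ℝ) (hU : ∀ n, Measurable (U n))
    (hUlaw : ∀ n, Measure.map (U n) P = unif01)
    (hUindep : ProbabilityTheory.iIndepFun U P)
    (π : Measure ℝ) (hπ : IsProbabilityMeasure π) (hπsupp : π Sᶜ = 0)
    (hπstat : IsStationaryDist μ A h B g π)
    (hπuniq : ∀ π' : Measure ℝ, IsProbabilityMeasure π' → π' Sᶜ = 0 →
      IsStationaryDist μ A h B g π' → π' = π) :
    (∀ x ∈ S, ∀ t : ℕ, 1 ≤ t →
      ∫ ω, fwd μ A h B g U (t - 1) x ω ∂P ≤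
        (1 - (a + b) ^ (t - 1)) / (1 - (a + b)) * g 0 0 + (a + b) ^ (t - 1) * x) ∧
    ∫ x, x ∂π ≤ g 0 0 / (1 - (a + b)) := by
  classical
  haveI hu01 : IsProbabilityMeasure unif01 := unif01_prob
  have hg00 : 0 ≤ g 0 0 := hgnn 0 0 le_rfl le_rfl
  have hr0 : (0:ℝ) ≤ a + b := by linarith
  have hr1 : (0:ℝ) < 1 - (a + b) := by linarith
  have hinv : ∀ w ∈ S, B (Function.invFun B w) = w := fun w hw => Function.invFun_eq (hSB hw)
  by_cases hA : ∀ w ∈ S, ∫⁻ y, ENNReal.ofReal y ∂expFam μ A h (Function.invFun B w) ≠ ⊤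
  · -- CASE A : all members of the family over S have finite mean
    have HM : ∀ w ∈ S, ∫⁻ u, ENNReal.ofReal (qtl μ A h B w u) ∂unif01 ≤ ENNReal.ofReal w := by
      intro w hw
      refine le_trans (qtl_lintegral_le w (hprob w hw) (hfamsupp _)) ?_
      rw [mean_lintegral_eq _ w (hA w hw) (hfamsupp _) (hmean w hw)]
    have hQint : ∀ z, ∫⁻ u, Qfun μ A h B S z u ∂unif01 ≤ ENNReal.ofReal z :=
      Qfun_lintegral_le hB S hS0 hSB hprob HM
    have hQmeas : Measurable (fun p : ℝ × ℝ => Qfun μ A h B S p.1 p.2) := Qfun_meas S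
    set K : ℝ → ℝ → ℝ :=
      fun z u => g (max z 0) (max ((Qfun μ A h B S z u).toReal) 0) with hKdef
    have hKmeas : Measurable (fun p : ℝ × ℝ => K p.1 p.2) := by
      have h1 : Measurable (fun p : ℝ × ℝ => (p.1, (Qfun μ A h B S p.1 p.2).toReal)) :=
        measurable_fst.prodMk (ENNReal.measurable_toReal.comp hQmeas)
      exact (gg_meas g a b ha hb hcontr).comp h1
    have hKid : ∀ z u, z ∈ S → u ∈ Set.Ioo (0:ℝ) 1 →
        K z u = g z (qtl μ A h B z u) ∧ g z (qtl μ A h B z u) ∈ S := by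
      intro z u hz hu
      have hq := Qfun_at_mem hB S hSB hprob z u hz hu.1 hu.2
      have hz0 : 0 ≤ z := hS0 hz
      have hqn : 0 ≤ qtl μ A h B z u := qtl_nonneg μ A h B z u
      refine ⟨?_, hSg z hz _ hqn⟩
      show g (max z 0) (max ((Qfun μ A h B S z u).toReal) 0) = _
      rw [hq, ENNReal.toReal_ofReal hqn, max_eq_left hz0, max_eq_left hqn]
    have hKbd : ∀ z u, z ∈ S → u ∈ Set.Ioo (0:ℝ) 1 →
        ENNReal.ofReal (K z u) ≤ ENNReal.ofReal (g 0 0)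
          + ENNReal.ofReal a * ENNReal.ofReal z
          + ENNReal.ofReal b * Qfun μ A h B S z u := by
      intro z u hz hu
      obtain ⟨hKeq, _⟩ := hKid z u hz hu
      have hq := Qfun_at_mem hB S hSB hprob z u hz hu.1 hu.2
      have hz0 : 0 ≤ z := hS0 hz
      have hqn : 0 ≤ qtl μ A h B z u := qtl_nonneg μ A h B z u
      have hgb : g z (qtl μ A h B z u) ≤ g 0 0 + (a * z + b * qtl μ A h B z u) := by
        have h1 := hcontr z 0 (qtl μ A h B z u) 0 hz0 le_rfl hqn le_rfl
        rw [sub_zero, sub_zero, abs_of_nonneg hz0, abs_of_nonneg hqn] at h1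
        have h2 := le_trans (le_abs_self _) h1
        linarith
      calc ENNReal.ofReal (K z u) = ENNReal.ofReal (g z (qtl μ A h B z u)) := by rw [hKeq]
        _ ≤ ENNReal.ofReal (g 0 0 + (a * z + b * qtl μ A h B z u)) :=
            ENNReal.ofReal_le_ofReal hgb
        _ ≤ ENNReal.ofReal (g 0 0) + ENNReal.ofReal (a * z + b * qtl μ A h B z u) :=
            ENNReal.ofReal_add_le
        _ ≤ ENNReal.ofReal (g 0 0)
            + (ENNReal.ofReal (a * z) + ENNReal.ofReal (b * qtl μ A h B z u)) :=
            add_le_add_right ENNReal.ofReal_add_le _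
        _ = ENNReal.ofReal (g 0 0) + ENNReal.ofReal a * ENNReal.ofReal z
            + ENNReal.ofReal b * Qfun μ A h B S z u := by
            rw [ENNReal.ofReal_mul ha, ENNReal.ofReal_mul hb, hq, add_assoc]
    constructor
    · -- Part 1 (Case A)
      intro x hx t ht
      have hx0 : 0 ≤ x := hS0 hx
      set Fp : ℕ → Ω → ℝ := fun m ω => itr K x m (fun i => U ((i:ℕ)+1) ω) with hFp
      have hFmeas : ∀ m, Measurable (Fp m) := fun m =>
        (itr_meas K hKmeas x m).comp (measurable_pi_lambda _ (fun i => hU _))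
      have hFrec : ∀ m ω, Fp (m+1) ω = K (Fp m ω) (U (m+1) ω) := fun m ω => rfl
      set N : Set Ω := ⋃ k, U k ⁻¹' (Set.Ioo (0:ℝ) 1)ᶜ with hN
      have hNnull : P N = 0 := by
        apply measure_iUnion_null
        intro k
        have h1 : P (U k ⁻¹' (Set.Ioo (0:ℝ) 1)ᶜ) =
            (Measure.map (U k) P) (Set.Ioo (0:ℝ) 1)ᶜ :=
          (Measure.map_apply (hU k) measurableSet_Ioo.compl).symm
        rw [h1, hUlaw k]
        exact unif01_compl
      have hNae : ∀ᵐ ω ∂P, ω ∉ N := by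
        rw [ae_iff]
        simpa using hNnull
      have hUmem : ∀ ω, ω ∉ N → ∀ k, U k ω ∈ Set.Ioo (0:ℝ) 1 := by
        intro ω hω k
        by_contra hc
        exact hω (Set.mem_iUnion.mpr ⟨k, hc⟩)
      have hpath : ∀ ω, ω ∉ N → ∀ m, Fp m ω ∈ S ∧ Fp m ω = fwd μ A h B g U m x ω := by
        intro ω hω m
        induction m with
        | zero => exact ⟨hx, rfl⟩
        | succ m ih =>
          have hu := hUmem ω hω (m+1)
          obtain ⟨hKeq, hmem⟩ := hKid (Fp m ω) (U (m+1) ω) ih.1 hu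
          constructor
          · rw [hFrec, hKeq]; exact hmem
          · rw [hFrec, hKeq, ih.2]; rfl
      -- independence of Fp m and U (m+1)
      have hindep : ∀ m, ProbabilityTheory.IndepFun (Fp m) (U (m+1)) P := by
        intro m
        set T1 : Finset ℕ := (Finset.range m).image Nat.succ with hT1
        set T2 : Finset ℕ := {m+1} with hT2
        have hdisj : Disjoint T1 T2 := by
          rw [hT2, Finset.disjoint_singleton_right, hT1]
          simp only [Finset.mem_image, Finset.mem_range, not_exists, not_and]
          intro k hk hkm
          omega
        have base := hUindep.indepFun_finset T1 T2 hdisj hU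
        have hmem1 : ∀ i : Fin m, (i:ℕ).succ ∈ T1 := fun i =>
          Finset.mem_image.mpr ⟨i, Finset.mem_range.mpr i.isLt, rfl⟩
        have hmem2 : m+1 ∈ T2 := Finset.mem_singleton_self (m+1)
        set φF : ({x // x ∈ T1} → ℝ) → ℝ :=
          fun v => itr K x m (fun i => v ⟨(i:ℕ).succ, hmem1 i⟩) with hφF
        set ψ : ({x // x ∈ T2} → ℝ) → ℝ := fun v => v ⟨m+1, hmem2⟩ with hψ
        have hφFm : Measurable φF :=
          (itr_meas K hKmeas x m).comp (measurable_pi_lambda _ (fun i => measurable_pi_apply _))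
        have hψm : Measurable ψ := measurable_pi_apply _
        have hcomp := base.comp hφFm hψm
        have e1 : (φF ∘ fun a (i : {x // x ∈ T1}) => U (↑i) a) = Fp m := rfl
        have e2 : (ψ ∘ fun a (i : {x // x ∈ T2}) => U (↑i) a) = U (m+1) := rfl
        rwa [e1, e2] at hcomp
      have hlaw : ∀ m, Measure.map (fun ω => (Fp m ω, U (m+1) ω)) P
          = (Measure.map (Fp m) P).prod unif01 := by
        intro m
        rw [← hUlaw (m+1)]
        exact (ProbabilityTheory.indepFun_iff_map_prod_eq_prod_map_map
          (hFmeas m).aemeasurable (hU (m+1)).aemeasurable).mp (hindep m)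
      have hJ : ∀ m, ∫⁻ ω, Qfun μ A h B S (Fp m ω) (U (m+1) ω) ∂P
          ≤ ∫⁻ ω, ENNReal.ofReal (Fp m ω) ∂P := by
        intro m
        haveI : IsProbabilityMeasure (Measure.map (Fp m) P) :=
          Measure.isProbabilityMeasure_map (hFmeas m).aemeasurable
        have hpair : Measurable (fun ω => (Fp m ω, U (m+1) ω)) :=
          (hFmeas m).prodMk (hU (m+1))
        have h1 : ∫⁻ ω, Qfun μ A h B S (Fp m ω) (U (m+1) ω) ∂P
            = ∫⁻ p, Qfun μ A h B S p.1 p.2 ∂((Measure.map (Fp m) P).prod unif01) := by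
          rw [← hlaw m, lintegral_map hQmeas hpair]
        rw [h1, lintegral_prod _ hQmeas.aemeasurable]
        calc ∫⁻ z, ∫⁻ u, Qfun μ A h B S z u ∂unif01 ∂(Measure.map (Fp m) P)
            ≤ ∫⁻ z, ENNReal.ofReal z ∂(Measure.map (Fp m) P) := lintegral_mono hQint
          _ = ∫⁻ ω, ENNReal.ofReal (Fp m ω) ∂P :=
              lintegral_map ENNReal.measurable_ofReal (hFmeas m)
      have hstep : ∀ m, ∫⁻ ω, ENNReal.ofReal (Fp (m+1) ω) ∂P ≤ ENNReal.ofReal (g 0 0)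
          + ENNReal.ofReal (a+b) * ∫⁻ ω, ENNReal.ofReal (Fp m ω) ∂P := by
        intro m
        have hmF : Measurable fun ω => ENNReal.ofReal (Fp m ω) :=
          ENNReal.measurable_ofReal.comp (hFmeas m)
        have hmQ : Measurable fun ω => Qfun μ A h B S (Fp m ω) (U (m+1) ω) :=
          hQmeas.comp ((hFmeas m).prodMk (hU (m+1)))
        have hm1 : Measurable fun ω => ENNReal.ofReal a * ENNReal.ofReal (Fp m ω) :=
          hmF.const_mul _
        have hm2 : Measurable fun ω => ENNReal.ofReal b * Qfun μ A h B S (Fp m ω) (U (m+1) ω) :=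
          hmQ.const_mul _
        have hb1 : ∫⁻ ω, ENNReal.ofReal (Fp (m+1) ω) ∂P ≤
            ∫⁻ ω, (ENNReal.ofReal (g 0 0) + ENNReal.ofReal a * ENNReal.ofReal (Fp m ω)
              + ENNReal.ofReal b * Qfun μ A h B S (Fp m ω) (U (m+1) ω)) ∂P := by
          apply lintegral_mono_ae
          filter_upwards [hNae] with ω hω
          rw [hFrec m ω]
          exact hKbd (Fp m ω) (U (m+1) ω) (hpath ω hω m).1 (hUmem ω hω (m+1))
        refine le_trans hb1 ?_
        rw [lintegral_add_left (f := fun ω => ENNReal.ofReal (g 0 0) + ENNReal.ofReal a * ENNReal.ofReal (Fp m ω)) (measurable_const.add hm1), lintegral_add_left measurable_const,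
          lintegral_const, measure_univ, mul_one,
          lintegral_const_mul _ hmF, lintegral_const_mul _ hmQ]
        have h2 : ENNReal.ofReal b * ∫⁻ ω, Qfun μ A h B S (Fp m ω) (U (m+1) ω) ∂P
            ≤ ENNReal.ofReal b * ∫⁻ ω, ENNReal.ofReal (Fp m ω) ∂P :=
          mul_le_mul_right (hJ m) _
        calc ENNReal.ofReal (g 0 0) + ENNReal.ofReal a * ∫⁻ ω, ENNReal.ofReal (Fp m ω) ∂P
              + ENNReal.ofReal b * ∫⁻ ω, Qfun μ A h B S (Fp m ω) (U (m+1) ω) ∂P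
            ≤ ENNReal.ofReal (g 0 0) + ENNReal.ofReal a * ∫⁻ ω, ENNReal.ofReal (Fp m ω) ∂P
              + ENNReal.ofReal b * ∫⁻ ω, ENNReal.ofReal (Fp m ω) ∂P := add_le_add_right h2 _
          _ = ENNReal.ofReal (g 0 0)
              + ENNReal.ofReal (a+b) * ∫⁻ ω, ENNReal.ofReal (Fp m ω) ∂P := by
              rw [add_assoc, ← add_mul, ← ENNReal.ofReal_add ha hb]
      have hcnn : ∀ m : ℕ, 0 ≤ (1 - (a+b)^m)/(1-(a+b)) * g 0 0 + (a+b)^m * x := by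
        intro m
        have hpow : (a+b)^m ≤ 1 := pow_le_one₀ hr0 (by linarith)
        have h1 : (0:ℝ) ≤ 1 - (a+b)^m := by linarith
        exact add_nonneg (mul_nonneg (div_nonneg h1 hr1.le) hg00)
          (mul_nonneg (pow_nonneg hr0 m) hx0)
      have hrec : ∀ m : ℕ, g 0 0 + (a+b) * ((1 - (a+b)^m)/(1-(a+b)) * g 0 0 + (a+b)^m * x)
          = (1 - (a+b)^(m+1))/(1-(a+b)) * g 0 0 + (a+b)^(m+1) * x := by
        intro m
        have hne : (1:ℝ) - (a+b) ≠ 0 := ne_of_gt hr1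
        field_simp
        ring
      have hInd : ∀ m, ∫⁻ ω, ENNReal.ofReal (Fp m ω) ∂P
          ≤ ENNReal.ofReal ((1 - (a+b)^m)/(1-(a+b)) * g 0 0 + (a+b)^m * x) := by
        intro m
        induction m with
        | zero =>
          have he : (fun ω => ENNReal.ofReal (Fp 0 ω)) = fun _ => ENNReal.ofReal x := rfl
          rw [he, lintegral_const, measure_univ, mul_one]
          apply ENNReal.ofReal_le_ofReal
          simp
        | succ m ih =>
          refine le_trans (hstep m) ?_
          calc ENNReal.ofReal (g 0 0)
              + ENNReal.ofReal (a+b) * ∫⁻ ω, ENNReal.ofReal (Fp m ω) ∂P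
              ≤ ENNReal.ofReal (g 0 0) + ENNReal.ofReal (a+b)
                * ENNReal.ofReal ((1 - (a+b)^m)/(1-(a+b)) * g 0 0 + (a+b)^m * x) :=
                add_le_add_right (mul_le_mul_right ih _) _
            _ = ENNReal.ofReal (g 0 0
                + (a+b) * ((1 - (a+b)^m)/(1-(a+b)) * g 0 0 + (a+b)^m * x)) := by
                rw [← ENNReal.ofReal_mul hr0,
                  ← ENNReal.ofReal_add hg00 (mul_nonneg hr0 (hcnn m))]
            _ = ENNReal.ofReal ((1 - (a+b)^(m+1))/(1-(a+b)) * g 0 0 + (a+b)^(m+1) * x) := by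
                rw [hrec m]
      have hcongr : ∫ ω, fwd μ A h B g U (t-1) x ω ∂P = ∫ ω, Fp (t-1) ω ∂P := by
        apply integral_congr_ae
        filter_upwards [hNae] with ω hω
        exact ((hpath ω hω (t-1)).2).symm
      rw [hcongr]
      have hnn : 0 ≤ᵐ[P] Fp (t-1) := by
        filter_upwards [hNae] with ω hω
        exact hS0 (hpath ω hω (t-1)).1
      rw [integral_eq_lintegral_of_nonneg_ae hnn (hFmeas (t-1)).aestronglyMeasurable]
      exact ENNReal.toReal_le_of_le_ofReal (hcnn (t-1)) (hInd (t-1))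
    · -- Part 2 (Case A)
      haveI := hπ
      obtain ⟨TS, hTSsub, hTSmeas, hTS0⟩ := exists_measurable_superset_of_null hπsupp
      have hbad : (π.prod unif01) ((TS ×ˢ Set.univ) ∪ (Set.univ ×ˢ (Set.Ioo (0:ℝ) 1)ᶜ)) = 0 := by
        apply measure_union_null
        · rw [Measure.prod_prod, hTS0, zero_mul]
        · rw [Measure.prod_prod, unif01_compl, mul_zero]
      have haeG : ∀ᵐ p ∂(π.prod unif01), p.1 ∈ S ∧ p.2 ∈ Set.Ioo (0:ℝ) 1 := by
        rw [ae_iff]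
        apply measure_mono_null _ hbad
        intro p hp
        simp only [Set.mem_setOf_eq, not_and_or] at hp
        rcases hp with hp1 | hp2
        · exact Set.mem_union_left _ ⟨hTSsub hp1, Set.mem_univ _⟩
        · exact Set.mem_union_right _ ⟨Set.mem_univ _, hp2⟩
      have haeT : (fun p : ℝ × ℝ => irf μ A h B g p.2 p.1)
          =ᵐ[π.prod unif01] (fun p : ℝ × ℝ => K p.1 p.2) := by
        filter_upwards [haeG] with p hp
        obtain ⟨hKeq, _⟩ := hKid p.1 p.2 hp.1 hp.2
        rw [hKeq]
        rfl
      have hTaem : AEMeasurable (fun p : ℝ × ℝ => irf μ A h B g p.2 p.1) (π.prod unif01) :=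
        hKmeas.aemeasurable.congr haeT.symm
      have hstat : Measure.map (fun p : ℝ × ℝ => irf μ A h B g p.2 p.1) (π.prod unif01) = π :=
        hπstat
      have key : ∫⁻ z, ENNReal.ofReal z ∂π ≤ ENNReal.ofReal (g 0 0)
          + ENNReal.ofReal (a+b) * ∫⁻ z, ENNReal.ofReal z ∂π := by
        have h0 : ∫⁻ z, ENNReal.ofReal z ∂π
            = ∫⁻ p, ENNReal.ofReal (irf μ A h B g p.2 p.1) ∂(π.prod unif01) := by
          conv_lhs => rw [← hstat]
          exact lintegral_map' ENNReal.measurable_ofReal.aemeasurable hTaem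
        refine le_trans (le_of_eq h0) ?_
        have hmF : Measurable fun p : ℝ × ℝ => ENNReal.ofReal p.1 :=
          ENNReal.measurable_ofReal.comp measurable_fst
        have hm1 : Measurable fun p : ℝ × ℝ => ENNReal.ofReal a * ENNReal.ofReal p.1 :=
          hmF.const_mul _
        have hm2 : Measurable fun p : ℝ × ℝ => ENNReal.ofReal b * Qfun μ A h B S p.1 p.2 :=
          hQmeas.const_mul _
        have hb1 : ∫⁻ p, ENNReal.ofReal (irf μ A h B g p.2 p.1) ∂(π.prod unif01) ≤
            ∫⁻ p, (ENNReal.ofReal (g 0 0) + ENNReal.ofReal a * ENNReal.ofReal p.1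
              + ENNReal.ofReal b * Qfun μ A h B S p.1 p.2) ∂(π.prod unif01) := by
          apply lintegral_mono_ae
          filter_upwards [haeG, haeT] with p hp hTp
          rw [hTp]
          exact hKbd p.1 p.2 hp.1 hp.2
        refine le_trans hb1 ?_
        rw [lintegral_add_left (f := fun p : ℝ × ℝ => ENNReal.ofReal (g 0 0) + ENNReal.ofReal a * ENNReal.ofReal p.1) (measurable_const.add hm1), lintegral_add_left measurable_const,
          lintegral_const, measure_univ, mul_one,
          lintegral_const_mul _ hmF, lintegral_const_mul _ hQmeas]
        have hfst : ∫⁻ p : ℝ × ℝ, ENNReal.ofReal p.1 ∂(π.prod unif01)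
            = ∫⁻ z, ENNReal.ofReal z ∂π := by
          rw [lintegral_prod _ hmF.aemeasurable]
          simp [lintegral_const, measure_univ]
        have hQp : ∫⁻ p : ℝ × ℝ, Qfun μ A h B S p.1 p.2 ∂(π.prod unif01)
            ≤ ∫⁻ z, ENNReal.ofReal z ∂π := by
          rw [lintegral_prod _ hQmeas.aemeasurable]
          exact lintegral_mono hQint
        rw [hfst]
        calc ENNReal.ofReal (g 0 0) + ENNReal.ofReal a * ∫⁻ z, ENNReal.ofReal z ∂π
              + ENNReal.ofReal b * ∫⁻ p : ℝ × ℝ, Qfun μ A h B S p.1 p.2 ∂(π.prod unif01)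
            ≤ ENNReal.ofReal (g 0 0) + ENNReal.ofReal a * ∫⁻ z, ENNReal.ofReal z ∂π
              + ENNReal.ofReal b * ∫⁻ z, ENNReal.ofReal z ∂π :=
              add_le_add_right (mul_le_mul_right hQp _) _
          _ = ENNReal.ofReal (g 0 0) + ENNReal.ofReal (a+b) * ∫⁻ z, ENNReal.ofReal z ∂π := by
              rw [add_assoc, ← add_mul, ← ENNReal.ofReal_add ha hb]
      rcases eq_or_ne (∫⁻ z, ENNReal.ofReal z ∂π) ⊤ with hMt | hMt
      · have hz : ∫ z, z ∂π = 0 := mean_zero_of_infinite π _ hMt rfl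
        rw [hz]
        exact div_nonneg hg00 hr1.le
      · have hfin2 : ENNReal.ofReal (g 0 0)
            + ENNReal.ofReal (a+b) * ∫⁻ z, ENNReal.ofReal z ∂π ≠ ⊤ :=
          ENNReal.add_ne_top.mpr ⟨ENNReal.ofReal_ne_top,
            ENNReal.mul_ne_top ENNReal.ofReal_ne_top hMt⟩
        have hreal := ENNReal.toReal_mono hfin2 key
        rw [ENNReal.toReal_add ENNReal.ofReal_ne_top
            (ENNReal.mul_ne_top ENNReal.ofReal_ne_top hMt),
          ENNReal.toReal_mul, ENNReal.toReal_ofReal hg00, ENNReal.toReal_ofReal hr0] at hreal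
        have haeS : ∀ᵐ z ∂π, z ∈ S := by
          rw [ae_iff]
          exact measure_mono_null (fun z hz => hz) hπsupp
        have hnn : 0 ≤ᵐ[π] (fun z : ℝ => z) := by
          filter_upwards [haeS] with z hz
          exact hS0 hz
        have hint : ∫ z, z ∂π = (∫⁻ z, ENNReal.ofReal z ∂π).toReal := by
          rw [integral_eq_lintegral_of_nonneg_ae hnn aestronglyMeasurable_id]
        rw [hint, le_div_iff₀ hr1]
        have hM0 : 0 ≤ (∫⁻ z, ENNReal.ofReal z ∂π).toReal := ENNReal.toReal_nonneg
        nlinarith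
  · -- CASE B : some member has infinite mean; then S ⊆ {0}
    push_neg at hA
    obtain ⟨w0, hw0S, hw0inf⟩ := hA
    have hw00 : w0 = 0 := mean_zero_of_infinite _ w0 hw0inf (hmean w0 hw0S)
    have hS01 : ∀ w ∈ S, w = 0 := by
      intro w hw
      by_contra hne
      have hwpos : 0 < w := lt_of_le_of_ne (hS0 hw) (Ne.symm hne)
      have hη : Function.invFun B w0 ≤ Function.invFun B w := by
        rw [← hB.le_iff_le, hinv w0 hw0S, hinv w hw, hw00]
        exact hwpos.le
      have hcomp := expFam_mean_compare (μ := μ) (A := A) (h := h)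
        (Function.invFun B w0) (Function.invFun B w) hη (hfamsupp _)
      rw [hw0inf] at hcomp
      have hwinf : ∫⁻ y, ENNReal.ofReal y ∂expFam μ A h (Function.invFun B w) = ⊤ := by
        by_contra hfin
        exact (ENNReal.mul_ne_top ENNReal.ofReal_ne_top hfin) (top_le_iff.mp hcomp)
      exact hne (mean_zero_of_infinite _ w hwinf (hmean w hw))
    constructor
    · intro x hx t ht
      have hx0 : x = 0 := hS01 x hx
      have h0S : (0:ℝ) ∈ S := hx0 ▸ hx
      have hg0 : ∀ y, 0 ≤ y → g 0 y = 0 := fun y hy => hS01 _ (hSg 0 h0S y hy)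
      have hfwd0 : ∀ n ω, fwd μ A h B g U n x ω = 0 := by
        intro n
        induction n with
        | zero => intro ω; exact hx0
        | succ n ih =>
          intro ω
          show irf μ A h B g (U (n+1) ω) (fwd μ A h B g U n x ω) = 0
          rw [ih ω, irf]
          exact hg0 _ (qtl_nonneg μ A h B 0 _)
      have hz : ∫ ω, fwd μ A h B g U (t-1) x ω ∂P = 0 := by
        simp only [hfwd0]
        exact integral_zero _ _
      rw [hz, hx0, hg0 0 le_rfl]
      simp
    · have hae0 : ∀ᵐ z ∂π, z = (0:ℝ) := by
        rw [ae_iff]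
        apply measure_mono_null _ hπsupp
        intro z hz
        simp only [Set.mem_setOf_eq] at hz
        exact fun hzS => hz (hS01 z hzS)
      have hz : ∫ z, z ∂π = ∫ (_ : ℝ), (0:ℝ) ∂π := by
        apply integral_congr_ae
        filter_upwards [hae0] with z hz
        exact hz
      rw [hz, integral_zero]
      exact div_nonneg hg00 hr1.le
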